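/- Let A ⊆ ℝ^d and suppose A ⊆ F + M where F is finite and M = π₁(Γ ∩ (ℝ^d × Ω)) with Γ ≤ ℝ^{d+e} a discrete subgroup, Ω ⊆ ℝ^e compact, and suppose there is v ∈ ℝ^e with ⟨v, π₂(Γ)⟩ = ℤ. Then with U = v^⊥ ⊆ ℝ^e, Γ' = Γ ∩ (ℝ^d × U), γ ∈ Γ chosen with ⟨v, π₂(γ)⟩ = 1, n_max = max_{z ∈ Ω} |⟨v, z⟩|, E = {n·π₁(γ) : |n| ≤ n_max}, and Ω' = ⋃_{|n| ≤ n_max} U ∩ (Ω - n·π₂(γ)), one has M ⊆ E + π₁'(Γ' ∩ (ℝ^d × Ω')), where π₁' : ℝ^d × U → ℝ^d is the projection. -/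

import Mathlib

open Pointwise RealInnerProductSpace

/-- Reduction of one internal dimension of a cut-and-project set when
`⟨v, π₂(Γ)⟩ = ℤ`: with `U = v^⊥`, `Γ' = Γ ∩ (ℝ^d × U)`, `γ₀ ∈ Γ` with
`⟨v, π₂ γ₀⟩ = 1`, `|⟨v, z⟩| ≤ n_max` on `Ω`, `E = {n·π₁ γ₀ : |n| ≤ n_max}` and
`Ω' = ⋃_{|n| ≤ n_max} U ∩ (Ω - n·π₂ γ₀)`, one has
`M ⊆ E + π₁(Γ' ∩ (ℝ^d × Ω'))`. -/
theorem internal_dimension_reduction (d e : ℕ)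
    (A F : Set (EuclideanSpace ℝ (Fin d))) (hF : F.Finite)
    (Γ : AddSubgroup (EuclideanSpace ℝ (Fin d) × EuclideanSpace ℝ (Fin e)))
    (hdisc : ∃ ε > 0, ∀ x ∈ Γ, x ≠ 0 → ε ≤ ‖x‖)
    (Ω : Set (EuclideanSpace ℝ (Fin e))) (hΩ : IsCompact Ω)
    (M : Set (EuclideanSpace ℝ (Fin d)))
    (hM : M = Prod.fst ''
      ((Γ : Set (EuclideanSpace ℝ (Fin d) × EuclideanSpace ℝ (Fin e))) ∩ Set.univ ×ˢ Ω))
    (hAFM : A ⊆ F + M)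
    (v : EuclideanSpace ℝ (Fin e))
    (hv : (fun γ : EuclideanSpace ℝ (Fin d) × EuclideanSpace ℝ (Fin e) => ⟪v, γ.2⟫) ''
      (Γ : Set (EuclideanSpace ℝ (Fin d) × EuclideanSpace ℝ (Fin e)))
      = Set.range (fun n : ℤ => (n : ℝ)))
    (γ₀ : EuclideanSpace ℝ (Fin d) × EuclideanSpace ℝ (Fin e))
    (hγ₀ : γ₀ ∈ Γ) (hγ₀v : ⟪v, γ₀.2⟫ = 1)
    (nmax : ℝ) (hnmax : ∀ z ∈ Ω, |⟪v, z⟫| ≤ nmax) :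
    M ⊆ {x : EuclideanSpace ℝ (Fin d) | ∃ n : ℤ, |(n : ℝ)| ≤ nmax ∧ x = n • γ₀.1} +
      Prod.fst '' {γ : EuclideanSpace ℝ (Fin d) × EuclideanSpace ℝ (Fin e) |
        γ ∈ Γ ∧ ⟪v, γ.2⟫ = 0 ∧ ∃ n : ℤ, |(n : ℝ)| ≤ nmax ∧ γ.2 + n • γ₀.2 ∈ Ω} := by
  intro x hx
  subst hM
  obtain ⟨γ, ⟨hγΓ, -, hγΩ⟩, rfl⟩ := hx
  have hmem : ⟪v, γ.2⟫ ∈ Set.range (fun n : ℤ => (n : ℝ)) := by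
    rw [← hv]; exact ⟨γ, hγΓ, rfl⟩
  obtain ⟨n, hn⟩ := hmem
  have hn' : (n : ℝ) = ⟪v, γ.2⟫ := hn
  have hnb : |(n : ℝ)| ≤ nmax := by rw [hn']; exact hnmax _ hγΩ
  refine ⟨n • γ₀.1, ⟨n, hnb, rfl⟩, (γ - n • γ₀).1, ⟨γ - n • γ₀, ⟨?_, ?_, ?_⟩, rfl⟩, ?_⟩
  · exact sub_mem hγΓ (zsmul_mem hγ₀ n)
  · have : (γ - n • γ₀).2 = γ.2 - n • γ₀.2 := rfl
    rw [this, inner_sub_right, ← Int.cast_smul_eq_zsmul ℝ, real_inner_smul_right, hγ₀v, ← hn']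
    ring
  · refine ⟨n, hnb, ?_⟩
    have : (γ - n • γ₀).2 = γ.2 - n • γ₀.2 := rfl
    rw [this]
    simpa using hγΩ
  · simp
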